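/- (BCD monotone convergence.) Assume the BCD setting of the nl_context with parameters τ, π, γ, λ, β > 0 and γ ≥ 1/β, and suppose the sequences {W_i^k}, {U_i^k}, {V_i^k} satisfy the same update conditions (1)–(4) as in the BCD descent property: U_h^{k+1} globally minimizes U ↦ (τ/2)‖U − W_h^k V_{h−1}^k‖² + (1/(2N))‖Y − (U)_hdmx‖²; W_i^{k+1} ∈ Prox_{βλ‖·‖_{2,0}}(W_i^{k+1} − β∇_W Φ(W_i^{k+1}; U_i^{k+1}, V_{i−1}^k)) with Φ(W; U, V) := (τ/2)‖U − WV‖² + (γ/2)‖W‖² for i ∈ [h]; V_i^{k+1} globally minimizes V ↦ (τ/2)‖U_{i+1}^{k+1} − W_{i+1}^{k+1}V‖² + (π/2)‖V − (U_i^k)_{0/1}‖² for i ∈ [h−1]; U_i^{k+1} globally minimizes U ↦ (τ/2)‖U − W_i^k V_{i−1}^k‖² + (π/2)‖V_i^{k+1} − (U)_{0/1}‖² for i ∈ [h−1]. Then the sequence { F(𝒲^k, 𝒰^k, 𝒱^k) }_{k≥0} is non-increasing and converges, and moreover W_i^{k+1} − W_i^k → 0 for every i ∈ [h] and V_i^{k+1}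 − V_i^k → 0 for every i ∈ [h−1] as k → ∞. -/

import Mathlib

set_option autoImplicit false

open Matrix Filter Topology

/-- Squared Frobenius norm of a matrix. -/
noncomputable def frobSq {m n : ℕ} (W : Matrix (Fin m) (Fin n) ℝ) : ℝ :=
  ∑ i, ∑ j, (W i j) ^ 2

/-- `‖W‖_{2,0}`: the number of nonzero columns of `W`, as a real number. -/
noncomputable def norm20 {m n : ℕ} (W : Matrix (Fin m) (Fin n) ℝ) : ℝ :=
  ((open Classical in Finset.univ.filter fun j : Fin n => Wᵀ j ≠ 0).card : ℝ)

/-- The proximal operator (as a set of global minimizers):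
`Prox_β G (H) = argmin_W { G(W) + (1/(2β))‖W − H‖² }`. -/
def ProxSet {m n : ℕ} (β : ℝ) (G : Matrix (Fin m) (Fin n) ℝ → ℝ)
    (H : Matrix (Fin m) (Fin n) ℝ) : Set (Matrix (Fin m) (Fin n) ℝ) :=
  {W | ∀ Z : Matrix (Fin m) (Fin n) ℝ,
    G W + (1 / (2 * β)) * frobSq (W - H) ≤ G Z + (1 / (2 * β)) * frobSq (Z - H)}

/-- The step (0/1) function applied entrywise to a matrix. -/
noncomputable def stepM {a b : ℕ} (A : Matrix (Fin a) (Fin b) ℝ) :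
    Matrix (Fin a) (Fin b) ℝ :=
  Matrix.of fun i j => if 0 < A i j then (1 : ℝ) else 0

/-- The hardmax of a matrix, applied columnwise: entry `(i,j)` is `1` if `A i j` is
the maximum of column `j`, and `0` otherwise. -/
noncomputable def hdmxM {a b : ℕ} (A : Matrix (Fin a) (Fin b) ℝ) :
    Matrix (Fin a) (Fin b) ℝ :=
  Matrix.of fun i j => if ∀ r, A r j ≤ A i j then (1 : ℝ) else 0


set_option maxHeartbeats 1000000

namespace BCDaux

/-- entrywise inner product of matrices -/
noncomputable def mip {m n : ℕ} (A B : Matrix (Fin m) (Fin n) ℝ) : ℝ :=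
  ∑ i, ∑ j, A i j * B i j

variable {m n p : ℕ}

lemma frobSq_eq_mip (A : Matrix (Fin m) (Fin n) ℝ) : frobSq A = mip A A := by
  simp [frobSq, mip, sq]

lemma mip_comm (A B : Matrix (Fin m) (Fin n) ℝ) : mip A B = mip B A := by
  simp [mip, mul_comm]

lemma frobSq_nonneg (A : Matrix (Fin m) (Fin n) ℝ) : 0 ≤ frobSq A := by
  apply Finset.sum_nonneg; intro i _
  apply Finset.sum_nonneg; intro j _
  positivity

lemma frobSq_add (A B : Matrix (Fin m) (Fin n) ℝ) :
    frobSq (A + B) = frobSq A + 2 * mip A B + frobSq B := by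
  simp only [frobSq, mip, Matrix.add_apply, add_sq, Finset.sum_add_distrib,
    Finset.mul_sum]
  ring

lemma frobSq_sub (A B : Matrix (Fin m) (Fin n) ℝ) :
    frobSq (A - B) = frobSq A - 2 * mip A B + frobSq B := by
  simp only [frobSq, mip, Matrix.sub_apply, sub_sq, Finset.sum_add_distrib,
    Finset.sum_sub_distrib, Finset.mul_sum]
  ring

lemma frobSq_smul (c : ℝ) (A : Matrix (Fin m) (Fin n) ℝ) :
    frobSq (c • A) = c ^ 2 * frobSq A := by
  simp only [frobSq, Matrix.smul_apply, smul_eq_mul, mul_pow, Finset.mul_sum]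

lemma frobSq_neg (A : Matrix (Fin m) (Fin n) ℝ) : frobSq (-A) = frobSq A := by
  simp [frobSq]

lemma mip_smul_right (c : ℝ) (A B : Matrix (Fin m) (Fin n) ℝ) :
    mip A (c • B) = c * mip A B := by
  simp only [mip, Matrix.smul_apply, smul_eq_mul, Finset.mul_sum]
  congr 1; funext i; congr 1; funext j; ring

lemma mip_add_right (A B C : Matrix (Fin m) (Fin n) ℝ) :
    mip A (B + C) = mip A B + mip A C := by
  simp only [mip, Matrix.add_apply, mul_add, Finset.sum_add_distrib]

lemma mip_sub_right (A B C : Matrix (Fin m) (Fin n) ℝ) :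
    mip A (B - C) = mip A B - mip A C := by
  simp only [mip, Matrix.sub_apply, mul_sub, Finset.sum_sub_distrib]

/-- trace-adjoint identity:  ⟨X, R Vᵀ⟩ = ⟨X V, R⟩ -/
lemma mip_mul_transpose (X : Matrix (Fin m) (Fin n) ℝ)
    (R : Matrix (Fin m) (Fin p) ℝ) (Vv : Matrix (Fin n) (Fin p) ℝ) :
    mip X (R * Vvᵀ) = mip (X * Vv) R := by
  simp only [mip, Matrix.mul_apply, Matrix.transpose_apply, Finset.mul_sum,
    Finset.sum_mul]
  rw [Finset.sum_congr rfl fun i _ => Finset.sum_comm]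
  congr 1; funext i
  congr 1; funext j
  congr 1; funext l
  ring

lemma entry_sq_le_frobSq (A : Matrix (Fin m) (Fin n) ℝ) (i : Fin m) (j : Fin n) :
    (A i j) ^ 2 ≤ frobSq A := by
  unfold frobSq
  have h1 : (A i j) ^ 2 ≤ ∑ j', (A i j') ^ 2 :=
    Finset.single_le_sum (f := fun j' => (A i j') ^ 2)
      (fun j' _ => sq_nonneg _) (Finset.mem_univ j)
  refine h1.trans ?_
  exact Finset.single_le_sum (f := fun i' => ∑ j', (A i' j') ^ 2)
    (fun i' _ => Finset.sum_nonneg fun j' _ => sq_nonneg _) (Finset.mem_univ i)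

/-- Cauchy–Schwarz for the entrywise inner product. -/
lemma mip_sq_le (A B : Matrix (Fin m) (Fin n) ℝ) :
    (mip A B) ^ 2 ≤ frobSq A * frobSq B := by
  have key := Finset.sum_mul_sq_le_sq_mul_sq (Finset.univ : Finset (Fin m × Fin n))
    (fun q => A q.1 q.2) (fun q => B q.1 q.2)
  simpa only [mip, frobSq, Fintype.sum_prod_type] using key


/-- Frobenius norm -/
noncomputable def nrm {m n : ℕ} (A : Matrix (Fin m) (Fin n) ℝ) : ℝ :=
  Real.sqrt (frobSq A)

lemma nrm_nonneg (A : Matrix (Fin m) (Fin n) ℝ) : 0 ≤ nrm A := Real.sqrt_nonneg _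

lemma sq_nrm (A : Matrix (Fin m) (Fin n) ℝ) : nrm A ^ 2 = frobSq A :=
  Real.sq_sqrt (frobSq_nonneg A)

lemma mip_le_nrm (A B : Matrix (Fin m) (Fin n) ℝ) : mip A B ≤ nrm A * nrm B := by
  have h1 := mip_sq_le A B
  have h2 := sq_nrm A
  have h3 := sq_nrm B
  nlinarith [nrm_nonneg A, nrm_nonneg B, mul_nonneg (nrm_nonneg A) (nrm_nonneg B)]

lemma nrm_add_le (A B : Matrix (Fin m) (Fin n) ℝ) : nrm (A + B) ≤ nrm A + nrm B := by
  have h1 : frobSq (A + B) ≤ (nrm A + nrm B) ^ 2 := by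
    rw [frobSq_add]
    have := mip_le_nrm A B
    have := sq_nrm A
    have := sq_nrm B
    nlinarith
  calc nrm (A + B) = Real.sqrt (frobSq (A + B)) := rfl
    _ ≤ Real.sqrt ((nrm A + nrm B) ^ 2) := Real.sqrt_le_sqrt h1
    _ = nrm A + nrm B := Real.sqrt_sq (add_nonneg (nrm_nonneg A) (nrm_nonneg B))

/-- Frobenius submultiplicativity, squared form. -/
lemma frobSq_mul_le (X : Matrix (Fin m) (Fin n) ℝ) (Z : Matrix (Fin n) (Fin p) ℝ) :
    frobSq (X * Z) ≤ frobSq X * frobSq Z := by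
  have key : ∀ (i : Fin m) (j : Fin p),
      ((X * Z) i j) ^ 2 ≤ (∑ l, X i l ^ 2) * (∑ l, Z l j ^ 2) := by
    intro i j
    have := Finset.sum_mul_sq_le_sq_mul_sq (Finset.univ : Finset (Fin n))
      (fun l => X i l) (fun l => Z l j)
    simpa [Matrix.mul_apply] using this
  calc frobSq (X * Z) ≤ ∑ i, ∑ j, (∑ l, X i l ^ 2) * (∑ l, Z l j ^ 2) := by
        apply Finset.sum_le_sum; intro i _
        apply Finset.sum_le_sum; intro j _
        exact key i j
    _ = (∑ i, ∑ l, X i l ^ 2) * (∑ j, ∑ l, Z l j ^ 2) := by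
        rw [Finset.sum_mul_sum]
    _ = frobSq X * frobSq Z := by
        unfold frobSq
        congr 1
        exact Finset.sum_comm

lemma nrm_mul_le (X : Matrix (Fin m) (Fin n) ℝ) (Z : Matrix (Fin n) (Fin p) ℝ) :
    nrm (X * Z) ≤ nrm X * nrm Z := by
  have h1 : frobSq (X * Z) ≤ (nrm X * nrm Z) ^ 2 := by
    rw [mul_pow, sq_nrm, sq_nrm]; exact frobSq_mul_le X Z
  calc nrm (X * Z) = Real.sqrt (frobSq (X * Z)) := rfl
    _ ≤ Real.sqrt ((nrm X * nrm Z) ^ 2) := Real.sqrt_le_sqrt h1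
    _ = nrm X * nrm Z := Real.sqrt_sq (mul_nonneg (nrm_nonneg X) (nrm_nonneg Z))

/- scale invariances -/

lemma norm20_smul {s : ℝ} (hs : s ≠ 0) (A : Matrix (Fin m) (Fin n) ℝ) :
    norm20 (s • A) = norm20 A := by
  unfold norm20
  congr 2
  classical
  apply Finset.filter_congr
  intro j _
  have : (s • A)ᵀ j = s • (Aᵀ j) := by
    funext i
    simp [Matrix.transpose_apply, Matrix.smul_apply]
  rw [this]
  simp only [ne_eq, smul_eq_zero, hs, false_or]

lemma stepM_smul {s : ℝ} (hs : 0 < s) (A : Matrix (Fin m) (Fin n) ℝ) :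
    stepM (s • A) = stepM A := by
  unfold stepM
  ext i j
  simp only [Matrix.of_apply, Matrix.smul_apply, smul_eq_mul]
  congr 1
  simp only [eq_iff_iff]
  constructor
  · intro hp
    by_contra hc
    push_neg at hc
    have : s * A i j ≤ 0 := mul_nonpos_of_nonneg_of_nonpos hs.le hc
    linarith
  · intro hp; exact mul_pos hs hp

lemma hdmxM_smul {s : ℝ} (hs : 0 < s) (A : Matrix (Fin m) (Fin n) ℝ) :
    hdmxM (s • A) = hdmxM A := by
  unfold hdmxM
  ext i j
  simp only [Matrix.of_apply, Matrix.smul_apply, smul_eq_mul]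
  congr 1
  simp only [eq_iff_iff]
  constructor
  · intro hp r; exact (mul_le_mul_iff_right₀ hs).1 (hp r)
  · intro hp r; exact (mul_le_mul_iff_right₀ hs).2 (hp r)

/-- If `0 ≤ A t² + X t` for all `t > -1`, then `X = 0`. -/
lemma quad_coef_zero {A X : ℝ} (hA : 0 ≤ A)
    (H : ∀ t : ℝ, -1 < t → 0 ≤ A * t ^ 2 + X * t) : X = 0 := by
  by_contra hX
  rcases lt_or_gt_of_ne hX with hneg | hpos
  · -- X < 0 : take a suitable positive t
    set t : ℝ := -X / (2 * (A + 1)) with htdef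
    have hApos : (0:ℝ) < 2 * (A + 1) := by linarith
    have htpos : 0 < t := div_pos (by linarith) hApos
    have h := H t (by linarith)
    have hX' : X = -(t * (2 * (A + 1))) := by
      rw [htdef, div_mul_cancel₀ _ hApos.ne']; ring
    rw [hX'] at h
    nlinarith [mul_pos htpos htpos, mul_nonneg hA (mul_pos htpos htpos).le]
  · -- X > 0 : take a suitable negative t (> -1)
    set m : ℝ := min (1/2) (X / (2 * (A + 1))) with hmdef
    have hApos : (0:ℝ) < 2 * (A + 1) := by linarith
    have hmpos : 0 < m := lt_min (by norm_num) (div_pos hpos hApos)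
    have hm1 : m ≤ 1/2 := min_le_left _ _
    have hm2 : m * (2 * (A + 1)) ≤ X := by
      have : m ≤ X / (2 * (A + 1)) := min_le_right _ _
      exact (le_div_iff₀ hApos).1 this
    have h := H (-m) (by linarith)
    have h' : 0 ≤ A * m ^ 2 - X * m := by nlinarith [h]
    nlinarith [mul_pos hmpos hmpos, mul_nonneg hA hmpos.le,
      mul_le_of_le_one_right (mul_nonneg hA hmpos.le) (by linarith : m ≤ 1)]


lemma norm20_nonneg (A : Matrix (Fin m) (Fin n) ℝ) : 0 ≤ norm20 A := by
  unfold norm20; positivity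

lemma frobSq_stepM_le (A : Matrix (Fin m) (Fin n) ℝ) :
    frobSq (stepM A) ≤ (m : ℝ) * n := by
  unfold frobSq stepM
  calc (∑ i, ∑ j, ((Matrix.of fun i j => if 0 < A i j then (1:ℝ) else 0) i j) ^ 2)
      ≤ ∑ (_ : Fin m), ∑ (_ : Fin n), (1:ℝ) := by
        apply Finset.sum_le_sum; intro i _
        apply Finset.sum_le_sum; intro j _
        simp only [Matrix.of_apply]
        split <;> norm_num
    _ = (m : ℝ) * n := by simp [Finset.sum_const, mul_comm]

/-- a_{k+1} ≤ q a_k + ε_k with q < 1, ε → 0, a ≥ 0  implies  a → 0. -/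
lemma tendsto_zero_of_contract (a ε : ℕ → ℝ) (q : ℝ) (hq0 : 0 ≤ q) (hq1 : q < 1)
    (ha : ∀ k, 0 ≤ a k) (hrec : ∀ k, a (k + 1) ≤ q * a k + ε k)
    (hε : Tendsto ε atTop (𝓝 0)) : Tendsto a atTop (𝓝 0) := by
  rw [Metric.tendsto_atTop]
  intro δ hδ
  have hq1' : 0 < 1 - q := by linarith
  have he0 : (0:ℝ) < (1 - q) * (δ / 4) := by positivity
  obtain ⟨K, hK⟩ := (Metric.tendsto_atTop.1 hε ((1 - q) * (δ / 4)) he0)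
  have hKb : ∀ k ≥ K, ε k ≤ (1 - q) * (δ / 4) := by
    intro k hk
    have := hK k hk
    rw [Real.dist_eq, sub_zero] at this
    exact (abs_le.1 this.le).2
  -- invariant by induction
  have hinv : ∀ nn : ℕ, a (K + nn) ≤ q ^ nn * a K + δ / 4 := by
    intro nn
    induction nn with
    | zero =>
      simp only [Nat.add_zero, pow_zero, one_mul]
      linarith [ha K, hδ]
    | succ nn ih =>
      have h1 : a (K + nn + 1) ≤ q * a (K + nn) + ε (K + nn) := hrec (K + nn)
      have h2 : ε (K + nn) ≤ (1 - q) * (δ / 4) := hKb _ (Nat.le_add_right _ _)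
      have h3 : q * a (K + nn) ≤ q * (q ^ nn * a K + δ / 4) :=
        mul_le_mul_of_nonneg_left ih hq0
      have : a (K + nn + 1) ≤ q ^ (nn + 1) * a K + δ / 4 := by
        calc a (K + nn + 1) ≤ q * (q ^ nn * a K + δ / 4) + (1 - q) * (δ / 4) := by
              linarith
          _ = q ^ (nn + 1) * a K + (q * (δ/4) + (1-q) * (δ/4)) := by ring
          _ = q ^ (nn + 1) * a K + δ / 4 := by ring
      have heq : K + (nn + 1) = K + nn + 1 := by omega
      rw [heq]
      exact this
  -- geometric part tends to zero
  have hgeo : Tendsto (fun nn : ℕ => q ^ nn * a K) atTop (𝓝 0) := by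
    have := (tendsto_pow_atTop_nhds_zero_of_lt_one hq0 hq1).mul_const (a K)
    simpa using this
  obtain ⟨N1, hN1⟩ := (Metric.tendsto_atTop.1 hgeo) (δ / 4) (by linarith)
  refine ⟨K + N1, fun k hk => ?_⟩
  have hkK : K ≤ k := le_trans (Nat.le_add_right _ _) hk
  have hdecomp : k = K + (k - K) := by omega
  have hm : N1 ≤ k - K := by omega
  have h1 : a k ≤ q ^ (k - K) * a K + δ / 4 := by
    have := hinv (k - K)
    rw [← hdecomp] at this
    exact this
  have h2 := hN1 (k - K) hm
  rw [Real.dist_eq, sub_zero] at h2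
  have h2' : q ^ (k - K) * a K < δ / 4 := (le_abs_self _).trans_lt h2
  rw [Real.dist_eq, sub_zero, abs_of_nonneg (ha k)]
  linarith

/-- frobSq M_k → 0 implies M_k → 0 entrywise (i.e. as matrices). -/
lemma tendsto_matrix_zero_of_frobSq {m n : ℕ} (M : ℕ → Matrix (Fin m) (Fin n) ℝ)
    (hfr : Tendsto (fun k => frobSq (M k)) atTop (𝓝 0)) :
    Tendsto M atTop (𝓝 (0 : Matrix (Fin m) (Fin n) ℝ)) := by
  have : Tendsto (fun k => (fun i j => M k i j)) atTop
      (𝓝 (fun (_ : Fin m) (_ : Fin n) => (0:ℝ))) := by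
    rw [tendsto_pi_nhds]
    intro i
    rw [tendsto_pi_nhds]
    intro j
    have hsq : Tendsto (fun k => Real.sqrt (frobSq (M k))) atTop (𝓝 0) := by
      have := (Real.continuous_sqrt.tendsto 0).comp hfr
      simpa [Function.comp_def] using this
    have hub : ∀ k, |M k i j| ≤ Real.sqrt (frobSq (M k)) := by
      intro k
      have h1 : (M k i j) ^ 2 ≤ frobSq (M k) := entry_sq_le_frobSq (M k) i j
      have h2 : |M k i j| = Real.sqrt ((M k i j) ^ 2) := by
        rw [Real.sqrt_sq_eq_abs]
      rw [h2]
      exact Real.sqrt_le_sqrt h1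
    have : Tendsto (fun k => |M k i j|) atTop (𝓝 0) :=
      squeeze_zero (fun k => abs_nonneg _) hub hsq
    exact (tendsto_zero_iff_abs_tendsto_zero _).2 this
  exact this


lemma mip_smul_left (c : ℝ) (A B : Matrix (Fin m) (Fin n) ℝ) :
    mip (c • A) B = c * mip A B := by
  rw [mip_comm, mip_smul_right, mip_comm]

lemma mip_neg_left (A B : Matrix (Fin m) (Fin n) ℝ) : mip (-A) B = -mip A B := by
  simp only [mip, Matrix.neg_apply, neg_mul, Finset.sum_neg_distrib]

/-- Core inequality for the `W`-update (uses `γ ≥ 1/β`). -/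
lemma g2_core {a b c : ℕ} {τ γ lam β : ℝ}
    (hτ : 0 < τ) (hγ : 0 < γ) (hβ : 0 < β) (hγβ : γ ≥ 1 / β)
    (Wp Wo : Matrix (Fin a) (Fin b) ℝ) (Vv : Matrix (Fin b) (Fin c) ℝ)
    (Up : Matrix (Fin a) (Fin c) ℝ)
    (hprox : Wp ∈ ProxSet β (fun Z => lam * norm20 Z)
      (Wp - β • (τ • ((Wp * Vv - Up) * Vvᵀ) + γ • Wp))) :
    lam * norm20 Wp + (γ / 2) * frobSq Wp + (τ / 2) * frobSq (Up - Wp * Vv) ≤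
    lam * norm20 Wo + (γ / 2) * frobSq Wo + (τ / 2) * frobSq (Up - Wo * Vv) := by
  have hY := hprox Wo
  set g : Matrix (Fin a) (Fin b) ℝ := τ • ((Wp * Vv - Up) * Vvᵀ) + γ • Wp with hg
  have e1 : Wp - (Wp - β • g) = β • g := sub_sub_cancel _ _
  have e2 : Wo - (Wp - β • g) = (Wo - Wp) + β • g := by abel
  have expand2 : frobSq (Wp - (Wp - β • g)) = β ^ 2 * frobSq g := by
    rw [e1, frobSq_smul]
  have expand : frobSq (Wo - (Wp - β • g)) =
      frobSq (Wo - Wp) + 2 * β * mip (Wo - Wp) g + β ^ 2 * frobSq g := by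
    rw [e2, frobSq_add, frobSq_smul, mip_smul_right]; ring
  rw [expand2, expand] at hY
  have hkey : (1 / (2 * β)) * (frobSq (Wo - Wp) + 2 * β * mip (Wo - Wp) g
      + β ^ 2 * frobSq g) = (1 / (2 * β)) * frobSq (Wo - Wp) + mip (Wo - Wp) g
      + (1 / (2 * β)) * (β ^ 2 * frobSq g) := by
    field_simp
  rw [hkey] at hY
  have hP2 : lam * norm20 Wp ≤ lam * norm20 Wo + (1 / (2 * β)) * frobSq (Wo - Wp)
      + mip (Wo - Wp) g := by linarith
  -- expansion identities
  have hWo : Wo = Wp + (Wo - Wp) := by abel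
  have eqA : (γ / 2) * frobSq Wo = (γ / 2) * frobSq Wp + γ * mip Wp (Wo - Wp)
      + (γ / 2) * frobSq (Wo - Wp) := by
    calc (γ / 2) * frobSq Wo = (γ / 2) * frobSq (Wp + (Wo - Wp)) := by rw [← hWo]
      _ = _ := by rw [frobSq_add]; ring
  have hUWo : Up - Wo * Vv = (Up - Wp * Vv) - (Wo - Wp) * Vv := by
    rw [Matrix.sub_mul]; abel
  have eqB : (τ / 2) * frobSq (Up - Wo * Vv) = (τ / 2) * frobSq (Up - Wp * Vv)
      - τ * mip (Up - Wp * Vv) ((Wo - Wp) * Vv)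
      + (τ / 2) * frobSq ((Wo - Wp) * Vv) := by
    rw [hUWo, frobSq_sub]; ring
  have eqC : mip (Wo - Wp) g = τ * mip ((Wo - Wp) * Vv) (Wp * Vv - Up)
      + γ * mip (Wo - Wp) Wp := by
    rw [hg, mip_add_right, mip_smul_right, mip_smul_right, mip_mul_transpose]
  have eqD : τ * mip (Up - Wp * Vv) ((Wo - Wp) * Vv)
      = -(τ * mip ((Wo - Wp) * Vv) (Wp * Vv - Up)) := by
    have h1 : Up - Wp * Vv = -(Wp * Vv - Up) := by abel
    rw [h1, mip_neg_left, mip_comm]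
    ring
  have eqE : γ * mip Wp (Wo - Wp) = γ * mip (Wo - Wp) Wp := by rw [mip_comm]
  have hcoef : (1 / (2 * β)) * frobSq (Wo - Wp) ≤ (γ / 2) * frobSq (Wo - Wp) := by
    apply mul_le_mul_of_nonneg_right _ (frobSq_nonneg _)
    have : 1 / (2 * β) = (1 / β) / 2 := by ring
    rw [this]
    linarith
  have hnn : 0 ≤ (τ / 2) * frobSq ((Wo - Wp) * Vv) :=
    mul_nonneg (by positivity) (frobSq_nonneg _)
  linarith


/-- Core inequality for the `V`-update: exact minimization of a `π`-strongly convex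
quadratic improves by `(π/4)‖ΔV‖²` over the previous point (midpoint trick). -/
lemma g3_core {a b c : ℕ} {τ π : ℝ} (hτ : 0 < τ) (hπ : 0 < π)
    (Wp : Matrix (Fin a) (Fin b) ℝ) (Up : Matrix (Fin a) (Fin c) ℝ)
    (Vn Vo bm : Matrix (Fin b) (Fin c) ℝ)
    (hmin : (τ / 2) * frobSq (Up - Wp * Vn) + (π / 2) * frobSq (Vn - bm) ≤
      (τ / 2) * frobSq (Up - Wp * ((1/2 : ℝ) • (Vn + Vo)))
        + (π / 2) * frobSq ((1/2 : ℝ) • (Vn + Vo) - bm)) :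
    (τ / 2) * frobSq (Up - Wp * Vn) + (π / 2) * frobSq (Vn - bm)
        + (π / 4) * frobSq (Vn - Vo) ≤
      (τ / 2) * frobSq (Up - Wp * Vo) + (π / 2) * frobSq (Vo - bm) := by
  have m1 : Up - Wp * ((1/2 : ℝ) • (Vn + Vo))
      = (1/2 : ℝ) • ((Up - Wp * Vn) + (Up - Wp * Vo)) := by
    rw [Matrix.mul_smul, Matrix.mul_add, smul_add]
    module
  have m2 : (1/2 : ℝ) • (Vn + Vo) - bm
      = (1/2 : ℝ) • ((Vn - bm) + (Vo - bm)) := by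
    module
  have e1 : (τ / 2) * frobSq (Up - Wp * ((1/2 : ℝ) • (Vn + Vo)))
      = (τ / 8) * frobSq (Up - Wp * Vn)
        + (τ / 4) * mip (Up - Wp * Vn) (Up - Wp * Vo)
        + (τ / 8) * frobSq (Up - Wp * Vo) := by
    rw [m1, frobSq_smul, frobSq_add]; ring
  have e2 : (π / 2) * frobSq ((1/2 : ℝ) • (Vn + Vo) - bm)
      = (π / 8) * frobSq (Vn - bm)
        + (π / 4) * mip (Vn - bm) (Vo - bm)
        + (π / 8) * frobSq (Vo - bm) := by
    rw [m2, frobSq_smul, frobSq_add]; ring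
  -- polarization: 2⟨P,Q⟩ = ‖P‖² + ‖Q‖² − ‖P−Q‖²
  have p1 : (τ / 4) * mip (Up - Wp * Vn) (Up - Wp * Vo)
      = (τ / 8) * frobSq (Up - Wp * Vn) + (τ / 8) * frobSq (Up - Wp * Vo)
        - (τ / 8) * frobSq (Wp * (Vo - Vn)) := by
    have hPQ : (Up - Wp * Vn) - (Up - Wp * Vo) = Wp * (Vo - Vn) := by
      rw [Matrix.mul_sub]; abel
    have := frobSq_sub (Up - Wp * Vn) (Up - Wp * Vo)
    rw [hPQ] at this
    linear_combination (τ / 8) * this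
  have p2 : (π / 4) * mip (Vn - bm) (Vo - bm)
      = (π / 8) * frobSq (Vn - bm) + (π / 8) * frobSq (Vo - bm)
        - (π / 8) * frobSq (Vn - Vo) := by
    have hPQ : (Vn - bm) - (Vo - bm) = Vn - Vo := by abel
    have := frobSq_sub (Vn - bm) (Vo - bm)
    rw [hPQ] at this
    linear_combination (π / 8) * this
  have hnn : 0 ≤ (τ / 8) * frobSq (Wp * (Vo - Vn)) :=
    mul_nonneg (by positivity) (frobSq_nonneg _)
  linarith

/-- Radial stationarity of the `W`-prox fixed point:
`γ‖W‖² + τ‖WV‖² = τ⟨WV, U⟩`. -/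
lemma radialW_core {a b c : ℕ} {τ γ lam β : ℝ}
    (hτ : 0 < τ) (hγ : 0 < γ) (hβ : 0 < β)
    (Wp : Matrix (Fin a) (Fin b) ℝ) (Vv : Matrix (Fin b) (Fin c) ℝ)
    (Up : Matrix (Fin a) (Fin c) ℝ)
    (hprox : Wp ∈ ProxSet β (fun Z => lam * norm20 Z)
      (Wp - β • (τ • ((Wp * Vv - Up) * Vvᵀ) + γ • Wp))) :
    γ * frobSq Wp + τ * frobSq (Wp * Vv) = τ * mip (Wp * Vv) Up := by
  set g : Matrix (Fin a) (Fin b) ℝ := τ • ((Wp * Vv - Up) * Vvᵀ) + γ • Wp with hg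
  clear_value g
  have hmain : mip Wp g = 0 := by
    have hq : ∀ t : ℝ, -1 < t →
        0 ≤ frobSq Wp * t ^ 2 + (2 * β * mip Wp g) * t := by
      intro t ht
      have hs : (1 + t) ≠ 0 := by intro hc; nlinarith [hc]
      have hY := hprox ((1 + t) • Wp)
      dsimp only at hY
      have hn20 : lam * norm20 ((1 + t) • Wp) = lam * norm20 Wp := by
        rw [norm20_smul hs]
      have eL : Wp - (Wp - β • g) = β • g := sub_sub_cancel _ _
      have eR : (1 + t) • Wp - (Wp - β • g) = t • Wp + β • g := by
        rw [add_smul, one_smul]; abel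
      rw [hn20, eL, eR] at hY
      have hexp : frobSq (t • Wp + β • g)
          = frobSq (β • g) + (frobSq Wp * t ^ 2 + (2 * β * mip Wp g) * t) := by
        rw [frobSq_add, frobSq_smul, frobSq_smul, mip_smul_left, mip_smul_right]
        ring
      rw [hexp] at hY
      have hc : (0:ℝ) < 1 / (2 * β) := by positivity
      by_contra hcon
      push_neg at hcon
      have hlt : (1 / (2 * β)) * (frobSq (β • g)
            + (frobSq Wp * t ^ 2 + (2 * β * mip Wp g) * t))
          < (1 / (2 * β)) * frobSq (β • g) := by
        apply mul_lt_mul_of_pos_left _ hc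
        linarith
      linarith
    have h2 : 2 * β * mip Wp g = 0 := quad_coef_zero (frobSq_nonneg Wp) hq
    rcases mul_eq_zero.1 h2 with h' | h'
    · exact absurd h' (by positivity)
    · exact h'
  have expand : mip Wp g = τ * (frobSq (Wp * Vv) - mip (Wp * Vv) Up)
      + γ * frobSq Wp := by
    rw [hg, mip_add_right, mip_smul_right, mip_smul_right, mip_mul_transpose,
      mip_sub_right, show frobSq (Wp * Vv) = mip (Wp * Vv) (Wp * Vv) from
        frobSq_eq_mip _,
      show frobSq Wp = mip Wp Wp from frobSq_eq_mip _]
  rw [expand] at hmain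
  linarith

/-- Radial stationarity of the scale-invariant `U`-updates: `‖U‖² = ⟨U, P⟩`. -/
lemma radialU_core {a c : ℕ}
    (Up P : Matrix (Fin a) (Fin c) ℝ)
    (hmin : ∀ t : ℝ, -1 < t →
      frobSq (Up - P) ≤ frobSq ((1 + t) • Up - P)) :
    frobSq Up = mip Up P := by
  have hq : ∀ t : ℝ, -1 < t →
      0 ≤ frobSq Up * t ^ 2 + (2 * mip Up (Up - P)) * t := by
    intro t ht
    have hY := hmin t ht
    have eR : (1 + t) • Up - P = (Up - P) + t • Up := by
      rw [add_smul, one_smul]; abel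
    rw [eR, frobSq_add, frobSq_smul, mip_smul_right] at hY
    nlinarith [hY, mip_comm Up (Up - P)]
  have h0 := quad_coef_zero (frobSq_nonneg Up) hq
  have h1 : mip Up (Up - P) = 0 := by linarith
  rw [mip_sub_right, ← frobSq_eq_mip] at h1
  linarith


lemma frobSq_zero : frobSq (0 : Matrix (Fin m) (Fin n) ℝ) = 0 := by
  simp [frobSq]

lemma frobSq_sub_le (A B : Matrix (Fin m) (Fin n) ℝ) :
    frobSq (A - B) ≤ 2 * frobSq A + 2 * frobSq B := by
  have h1 := frobSq_sub A B
  have h2 := mip_sq_le A B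
  nlinarith [frobSq_nonneg A, frobSq_nonneg B, sq_nonneg (frobSq A - frobSq B)]

lemma sum_Icc2_shift (h : ℕ) (G : ℕ → ℝ) :
    (∑ i ∈ Finset.Icc 2 h, G i) = ∑ i ∈ Finset.Icc 1 (h - 1), G (i + 1) := by
  apply Finset.sum_nbij' (fun i => i - 1) (fun j => j + 1)
  · intro a ha; simp only [Finset.mem_Icc] at *; omega
  · intro a ha; simp only [Finset.mem_Icc] at *; omega
  · intro a ha; simp only [Finset.mem_Icc] at ha; omega
  · intro a ha; simp only [Finset.mem_Icc] at ha; omega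
  · intro a ha; simp only [Finset.mem_Icc] at ha; congr 1; omega

lemma sum_split_top {h : ℕ} (hh : 1 ≤ h) (G : ℕ → ℝ) :
    (∑ i ∈ Finset.Icc 1 h, G i) = (∑ i ∈ Finset.Icc 1 (h - 1), G i) + G h := by
  have hh1 : h - 1 + 1 = h := by omega
  have := Finset.sum_Icc_succ_top (a := 1) (b := h - 1) (by omega) G
  rw [hh1] at this
  exact this

lemma sum_split_bot {h : ℕ} (hh : 1 ≤ h) (G : ℕ → ℝ) :
    (∑ i ∈ Finset.Icc 1 h, G i) = G 1 + ∑ i ∈ Finset.Icc 2 h, G i := by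
  have hins : insert 1 (Finset.Icc 2 h) = Finset.Icc 1 h := by
    have := Finset.insert_Icc_add_one_left_eq_Icc (a := 1) (b := h) hh
    simpa using this
  rw [← hins, Finset.sum_insert (by simp)]

end BCDaux

/-- BCD monotone convergence: if the BCD iterates satisfy the update
conditions (1)–(4) and `γ ≥ 1/β`, then the sequence of objective values
`F(𝒲^k, 𝒰^k, 𝒱^k)` is non-increasing and converges, and the successive differences
`W_i^{k+1} − W_i^k` and `V_i^{k+1} − V_i^k` tend to `0`. -/
theorem BCD_monotone_convergence
    (h N : ℕ) (hh : 1 ≤ h) (hN : 1 ≤ N)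
    (d : ℕ → ℕ) (hd : ∀ i, 1 ≤ d i)
    (Y : Matrix (Fin (d h)) (Fin N) ℝ) (V0 : Matrix (Fin (d 0)) (Fin N) ℝ)
    (τ π γ lam β : ℝ)
    (hτ : 0 < τ) (hπ : 0 < π) (hγ : 0 < γ) (hlam : 0 < lam) (hβ : 0 < β)
    (hγβ : γ ≥ 1 / β)
    (W : ℕ → (i : ℕ) → Matrix (Fin (d i)) (Fin (d (i - 1))) ℝ)
    (U : ℕ → (i : ℕ) → Matrix (Fin (d i)) (Fin N) ℝ)
    (V : ℕ → (i : ℕ) → Matrix (Fin (d i)) (Fin N) ℝ)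
    (hV0 : ∀ k, V k 0 = V0)
    (F : ((i : ℕ) → Matrix (Fin (d i)) (Fin (d (i - 1))) ℝ) →
      ((i : ℕ) → Matrix (Fin (d i)) (Fin N) ℝ) →
      ((i : ℕ) → Matrix (Fin (d i)) (Fin N) ℝ) → ℝ)
    (hF : F = fun Wf Uf Vf =>
      (1 / (2 * (N : ℝ))) * frobSq (Y - hdmxM (Uf h)) +
      (∑ i ∈ Finset.Icc 1 h, (lam * norm20 (Wf i) + (γ / 2) * frobSq (Wf i))) +
      (τ / 2) * (∑ i ∈ Finset.Icc 1 h, frobSq (Uf i - Wf i * Vf (i - 1))) +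
      (π / 2) * (∑ i ∈ Finset.Icc 1 (h - 1), frobSq (Vf i - stepM (Uf i))))
    -- (1): `U_h^{k+1}` globally minimizes its subproblem
    (hUh : ∀ k, ∀ Z : Matrix (Fin (d h)) (Fin N) ℝ,
      (τ / 2) * frobSq (U (k + 1) h - W k h * V k (h - 1)) +
          (1 / (2 * (N : ℝ))) * frobSq (Y - hdmxM (U (k + 1) h)) ≤
        (τ / 2) * frobSq (Z - W k h * V k (h - 1)) +
          (1 / (2 * (N : ℝ))) * frobSq (Y - hdmxM Z))
    -- (2): `W_i^{k+1}` satisfies the proximal fixed-point inclusion, with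
    -- `∇_W Φ(W; U, V) = τ(WV − U)Vᵀ + γW` for `Φ(W;U,V) = (τ/2)‖U−WV‖² + (γ/2)‖W‖²`
    (hWup : ∀ k, ∀ i ∈ Finset.Icc 1 h,
      W (k + 1) i ∈ ProxSet β (fun Z => lam * norm20 Z)
        (W (k + 1) i - β •
          (τ • ((W (k + 1) i * V k (i - 1) - U (k + 1) i) * (V k (i - 1))ᵀ) +
            γ • W (k + 1) i)))
    -- (3): `V_i^{k+1}` globally minimizes its subproblem (indexed here by
    -- `i ∈ {2, …, h}`, i.e. the subproblem of `V_{i−1}^{k+1}` for `i−1 ∈ [h−1]`)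
    (hVup : ∀ k, ∀ i ∈ Finset.Icc 2 h, ∀ Z : Matrix (Fin (d (i - 1))) (Fin N) ℝ,
      (τ / 2) * frobSq (U (k + 1) i - W (k + 1) i * V (k + 1) (i - 1)) +
          (π / 2) * frobSq (V (k + 1) (i - 1) - stepM (U k (i - 1))) ≤
        (τ / 2) * frobSq (U (k + 1) i - W (k + 1) i * Z) +
          (π / 2) * frobSq (Z - stepM (U k (i - 1))))
    -- (4): `U_i^{k+1}` globally minimizes its subproblem
    (hUup : ∀ k, ∀ i ∈ Finset.Icc 1 (h - 1), ∀ Z : Matrix (Fin (d i)) (Fin N) ℝ,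
      (τ / 2) * frobSq (U (k + 1) i - W k i * V k (i - 1)) +
          (π / 2) * frobSq (V (k + 1) i - stepM (U (k + 1) i)) ≤
        (τ / 2) * frobSq (Z - W k i * V k (i - 1)) +
          (π / 2) * frobSq (V (k + 1) i - stepM Z)) :
    (∀ k : ℕ,
      F (W (k + 1)) (U (k + 1)) (V (k + 1)) ≤ F (W k) (U k) (V k)) ∧
    (∃ c : ℝ, Tendsto (fun k => F (W k) (U k) (V k)) atTop (𝓝 c)) ∧
    (∀ i ∈ Finset.Icc 1 h,
      Tendsto (fun k => W (k + 1) i - W k i) atTop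
        (𝓝 (0 : Matrix (Fin (d i)) (Fin (d (i - 1))) ℝ))) ∧
    (∀ i ∈ Finset.Icc 1 (h - 1),
      Tendsto (fun k => V (k + 1) i - V k i) atTop
        (𝓝 (0 : Matrix (Fin (d i)) (Fin N) ℝ))) := by
  classical
  have hNpos : (0:ℝ) < (N:ℝ) := by exact_mod_cast hN
  set FF : ℕ → ℝ := fun k => F (W k) (U k) (V k) with hFFdef
  have hFF : ∀ k : ℕ, FF k =
      (1 / (2 * (N : ℝ))) * frobSq (Y - hdmxM (U k h)) +
      (∑ i ∈ Finset.Icc 1 h, (lam * norm20 (W k i) + (γ / 2) * frobSq (W k i))) +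
      (τ / 2) * (∑ i ∈ Finset.Icc 1 h, frobSq (U k i - W k i * V k (i - 1))) +
      (π / 2) * (∑ i ∈ Finset.Icc 1 (h - 1), frobSq (V k i - stepM (U k i))) := by
    intro k
    show F (W k) (U k) (V k) = _
    rw [hF]
  -- ==================== KEY DESCENT INEQUALITY ====================
  have key : ∀ k : ℕ, FF (k + 1)
      + (π / 4) * (∑ i ∈ Finset.Icc 1 (h - 1), frobSq (V (k + 1) i - V k i))
      ≤ FF k := by
    intro k
    -- (1)
    have g1 := hUh k (U k h)
    -- (2), summed
    have g2 : ∀ i ∈ Finset.Icc 1 h,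
        (lam * norm20 (W (k + 1) i) + (γ / 2) * frobSq (W (k + 1) i))
          + (τ / 2) * frobSq (U (k + 1) i - W (k + 1) i * V k (i - 1))
        ≤ (lam * norm20 (W k i) + (γ / 2) * frobSq (W k i))
          + (τ / 2) * frobSq (U (k + 1) i - W k i * V k (i - 1)) := by
      intro i hi
      have := BCDaux.g2_core hτ hγ hβ hγβ (W (k + 1) i) (W k i)
        (V k (i - 1)) (U (k + 1) i) (hWup k i hi)
      linarith
    have A2 : (∑ i ∈ Finset.Icc 1 h,
          (lam * norm20 (W (k + 1) i) + (γ / 2) * frobSq (W (k + 1) i)))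
        + (τ / 2) * (∑ i ∈ Finset.Icc 1 h,
          frobSq (U (k + 1) i - W (k + 1) i * V k (i - 1)))
        ≤ (∑ i ∈ Finset.Icc 1 h,
          (lam * norm20 (W k i) + (γ / 2) * frobSq (W k i)))
        + (τ / 2) * (∑ i ∈ Finset.Icc 1 h,
          frobSq (U (k + 1) i - W k i * V k (i - 1))) := by
      simp only [Finset.mul_sum, ← Finset.sum_add_distrib]
      exact Finset.sum_le_sum g2
    -- (3), summed
    have g3 : ∀ i ∈ Finset.Icc 2 h,
        (τ / 2) * frobSq (U (k + 1) i - W (k + 1) i * V (k + 1) (i - 1))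
          + (π / 2) * frobSq (V (k + 1) (i - 1) - stepM (U k (i - 1)))
          + (π / 4) * frobSq (V (k + 1) (i - 1) - V k (i - 1))
        ≤ (τ / 2) * frobSq (U (k + 1) i - W (k + 1) i * V k (i - 1))
          + (π / 2) * frobSq (V k (i - 1) - stepM (U k (i - 1))) := by
      intro i hi
      exact BCDaux.g3_core hτ hπ _ _ _ _ _
        (hVup k i hi ((1/2 : ℝ) • (V (k + 1) (i - 1) + V k (i - 1))))
    have A3 : (τ / 2) * (∑ i ∈ Finset.Icc 2 h,
          frobSq (U (k + 1) i - W (k + 1) i * V (k + 1) (i - 1)))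
        + (π / 2) * (∑ i ∈ Finset.Icc 2 h,
          frobSq (V (k + 1) (i - 1) - stepM (U k (i - 1))))
        + (π / 4) * (∑ i ∈ Finset.Icc 2 h,
          frobSq (V (k + 1) (i - 1) - V k (i - 1)))
        ≤ (τ / 2) * (∑ i ∈ Finset.Icc 2 h,
          frobSq (U (k + 1) i - W (k + 1) i * V k (i - 1)))
        + (π / 2) * (∑ i ∈ Finset.Icc 2 h,
          frobSq (V k (i - 1) - stepM (U k (i - 1)))) := by
      simp only [Finset.mul_sum, ← Finset.sum_add_distrib]
      exact Finset.sum_le_sum g3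
    -- (4), summed
    have g4 : ∀ i ∈ Finset.Icc 1 (h - 1),
        (τ / 2) * frobSq (U (k + 1) i - W k i * V k (i - 1))
          + (π / 2) * frobSq (V (k + 1) i - stepM (U (k + 1) i))
        ≤ (τ / 2) * frobSq (U k i - W k i * V k (i - 1))
          + (π / 2) * frobSq (V (k + 1) i - stepM (U k i)) :=
      fun i hi => hUup k i hi (U k i)
    have A4 : (τ / 2) * (∑ i ∈ Finset.Icc 1 (h - 1),
          frobSq (U (k + 1) i - W k i * V k (i - 1)))
        + (π / 2) * (∑ i ∈ Finset.Icc 1 (h - 1),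
          frobSq (V (k + 1) i - stepM (U (k + 1) i)))
        ≤ (τ / 2) * (∑ i ∈ Finset.Icc 1 (h - 1),
          frobSq (U k i - W k i * V k (i - 1)))
        + (π / 2) * (∑ i ∈ Finset.Icc 1 (h - 1),
          frobSq (V (k + 1) i - stepM (U k i))) := by
      simp only [Finset.mul_sum, ← Finset.sum_add_distrib]
      exact Finset.sum_le_sum g4
    -- reindex the (i-1)-indexed sums from Icc 2 h to Icc 1 (h-1)
    have r1 : (∑ i ∈ Finset.Icc 2 h, frobSq (V (k + 1) (i - 1) - stepM (U k (i - 1))))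
        = ∑ i ∈ Finset.Icc 1 (h - 1), frobSq (V (k + 1) i - stepM (U k i)) := by
      rw [BCDaux.sum_Icc2_shift]
      exact Finset.sum_congr rfl fun x _ => rfl
    have r2 : (∑ i ∈ Finset.Icc 2 h, frobSq (V (k + 1) (i - 1) - V k (i - 1)))
        = ∑ i ∈ Finset.Icc 1 (h - 1), frobSq (V (k + 1) i - V k i) := by
      rw [BCDaux.sum_Icc2_shift]
      exact Finset.sum_congr rfl fun x _ => rfl
    have r3 : (∑ i ∈ Finset.Icc 2 h, frobSq (V k (i - 1) - stepM (U k (i - 1))))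
        = ∑ i ∈ Finset.Icc 1 (h - 1), frobSq (V k i - stepM (U k i)) := by
      rw [BCDaux.sum_Icc2_shift]
      exact Finset.sum_congr rfl fun x _ => rfl
    rw [r1, r2, r3] at A3
    -- split sums over Icc 1 h
    have E1 : (τ / 2) * (∑ i ∈ Finset.Icc 1 h,
          frobSq (U (k + 1) i - W (k + 1) i * V k (i - 1)))
        = (τ / 2) * frobSq (U (k + 1) 1 - W (k + 1) 1 * V k (1 - 1))
          + (τ / 2) * (∑ i ∈ Finset.Icc 2 h,
            frobSq (U (k + 1) i - W (k + 1) i * V k (i - 1))) := by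
      have hs := BCDaux.sum_split_bot hh
        (fun i => frobSq (U (k + 1) i - W (k + 1) i * V k (i - 1)))
      linear_combination (τ / 2) * hs
    have E2 : (τ / 2) * (∑ i ∈ Finset.Icc 1 h,
          frobSq (U (k + 1) i - W (k + 1) i * V (k + 1) (i - 1)))
        = (τ / 2) * frobSq (U (k + 1) 1 - W (k + 1) 1 * V (k + 1) (1 - 1))
          + (τ / 2) * (∑ i ∈ Finset.Icc 2 h,
            frobSq (U (k + 1) i - W (k + 1) i * V (k + 1) (i - 1))) := by
      have hs := BCDaux.sum_split_bot hh
        (fun i => frobSq (U (k + 1) i - W (k + 1) i * V (k + 1) (i - 1)))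
      linear_combination (τ / 2) * hs
    have E3 : (τ / 2) * (∑ i ∈ Finset.Icc 1 h,
          frobSq (U (k + 1) i - W k i * V k (i - 1)))
        = (τ / 2) * (∑ i ∈ Finset.Icc 1 (h - 1),
            frobSq (U (k + 1) i - W k i * V k (i - 1)))
          + (τ / 2) * frobSq (U (k + 1) h - W k h * V k (h - 1)) := by
      have hs := BCDaux.sum_split_top hh
        (fun i => frobSq (U (k + 1) i - W k i * V k (i - 1)))
      linear_combination (τ / 2) * hs
    have E4 : (τ / 2) * (∑ i ∈ Finset.Icc 1 h,
          frobSq (U k i - W k i * V k (i - 1)))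
        = (τ / 2) * (∑ i ∈ Finset.Icc 1 (h - 1),
            frobSq (U k i - W k i * V k (i - 1)))
          + (τ / 2) * frobSq (U k h - W k h * V k (h - 1)) := by
      have hs := BCDaux.sum_split_top hh
        (fun i => frobSq (U k i - W k i * V k (i - 1)))
      linear_combination (τ / 2) * hs
    have E5 : (τ / 2) * frobSq (U (k + 1) 1 - W (k + 1) 1 * V (k + 1) (1 - 1))
        = (τ / 2) * frobSq (U (k + 1) 1 - W (k + 1) 1 * V k (1 - 1)) := by
      show (τ / 2) * frobSq (U (k + 1) 1 - W (k + 1) 1 * V (k + 1) 0)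
          = (τ / 2) * frobSq (U (k + 1) 1 - W (k + 1) 1 * V k 0)
      rw [hV0 (k + 1), hV0 k]
    have hFk := hFF k
    have hFk1 := hFF (k + 1)
    linarith
  -- ==================== MONOTONICITY ====================
  have dvnonneg : ∀ k : ℕ, 0 ≤ (π / 4) *
      (∑ i ∈ Finset.Icc 1 (h - 1), frobSq (V (k + 1) i - V k i)) := by
    intro k
    apply mul_nonneg (by positivity)
    exact Finset.sum_nonneg fun i _ => BCDaux.frobSq_nonneg _
  have mono : ∀ k : ℕ, FF (k + 1) ≤ FF k := by
    intro k
    have := key k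
    have := dvnonneg k
    linarith
  -- ==================== NONNEGATIVITY AND CONVERGENCE ====================
  have nonneg : ∀ k : ℕ, 0 ≤ FF k := by
    intro k
    rw [hFF k]
    have h1 : 0 ≤ (1 / (2 * (N : ℝ))) * frobSq (Y - hdmxM (U k h)) :=
      mul_nonneg (by positivity) (BCDaux.frobSq_nonneg _)
    have h2 : 0 ≤ ∑ i ∈ Finset.Icc 1 h,
        (lam * norm20 (W k i) + (γ / 2) * frobSq (W k i)) :=
      Finset.sum_nonneg fun i _ => add_nonneg
        (mul_nonneg hlam.le (BCDaux.norm20_nonneg _))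
        (mul_nonneg (by positivity) (BCDaux.frobSq_nonneg _))
    have h3 : 0 ≤ (τ / 2) * (∑ i ∈ Finset.Icc 1 h,
        frobSq (U k i - W k i * V k (i - 1))) :=
      mul_nonneg (by positivity)
        (Finset.sum_nonneg fun i _ => BCDaux.frobSq_nonneg _)
    have h4 : 0 ≤ (π / 2) * (∑ i ∈ Finset.Icc 1 (h - 1),
        frobSq (V k i - stepM (U k i))) :=
      mul_nonneg (by positivity)
        (Finset.sum_nonneg fun i _ => BCDaux.frobSq_nonneg _)
    linarith
  have hconv : Tendsto FF atTop (𝓝 (⨅ k, FF k)) := by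
    apply tendsto_atTop_ciInf (antitone_nat_of_succ_le mono)
    exact ⟨0, by rintro x ⟨k, rfl⟩; exact nonneg k⟩
  have diff0 : Tendsto (fun k => FF k - FF (k + 1)) atTop (𝓝 0) := by
    have h1 : Tendsto (fun k => FF (k + 1)) atTop (𝓝 (⨅ k, FF k)) :=
      (tendsto_add_atTop_iff_nat 1).2 hconv
    have := hconv.sub h1
    simpa using this
  -- ==================== ΔV → 0 (squared norms) ====================
  have dv0 : ∀ j ∈ Finset.Icc 1 (h - 1),
      Tendsto (fun k => frobSq (V (k + 1) j - V k j)) atTop (𝓝 0) := by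
    intro j hj
    have hub : ∀ k : ℕ, frobSq (V (k + 1) j - V k j)
        ≤ (4 / π) * (FF k - FF (k + 1)) := by
      intro k
      have h1 := key k
      have h2 : frobSq (V (k + 1) j - V k j)
          ≤ ∑ i ∈ Finset.Icc 1 (h - 1), frobSq (V (k + 1) i - V k i) :=
        Finset.single_le_sum (f := fun i => frobSq (V (k + 1) i - V k i))
          (fun i _ => BCDaux.frobSq_nonneg _) hj
      have h3 : (π / 4) * frobSq (V (k + 1) j - V k j) ≤ FF k - FF (k + 1) := by
        have := mul_le_mul_of_nonneg_left h2 (by positivity : (0:ℝ) ≤ π / 4)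
        linarith
      have h4 : frobSq (V (k + 1) j - V k j)
          = (4 / π) * ((π / 4) * frobSq (V (k + 1) j - V k j)) := by
        field_simp
      rw [h4]
      exact mul_le_mul_of_nonneg_left h3 (by positivity)
    have hlim : Tendsto (fun k => (4 / π) * (FF k - FF (k + 1))) atTop (𝓝 0) := by
      have := diff0.const_mul (4 / π)
      simpa using this
    exact squeeze_zero (fun k => BCDaux.frobSq_nonneg _) hub hlim
  -- ==================== conclusion 4 ====================
  have conc4 : ∀ i ∈ Finset.Icc 1 (h - 1),
      Tendsto (fun k => V (k + 1) i - V k i) atTop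
        (𝓝 (0 : Matrix (Fin (d i)) (Fin N) ℝ)) := by
    intro i hi
    exact BCDaux.tendsto_matrix_zero_of_frobSq _ (dv0 i hi)
  -- ==================== conclusion 3 ====================
  have conc3 : ∀ i ∈ Finset.Icc 1 h,
      Tendsto (fun k => W (k + 1) i - W k i) atTop
        (𝓝 (0 : Matrix (Fin (d i)) (Fin (d (i - 1))) ℝ)) := by
    intro i hi
    obtain ⟨hi1, hih⟩ := Finset.mem_Icc.1 hi
    have hFle : ∀ k : ℕ, FF k ≤ FF 0 := by
      intro k
      induction k with
      | zero => exact le_refl _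
      | succ n ih => exact (mono n).trans ih
    have hFF0 : 0 ≤ FF 0 := nonneg 0
    -- radial stationarity identities
    have hIW : ∀ k : ℕ, γ * frobSq (W (k + 1) i)
        + τ * frobSq (W (k + 1) i * V k (i - 1))
        = τ * BCDaux.mip (W (k + 1) i * V k (i - 1)) (U (k + 1) i) :=
      fun k => BCDaux.radialW_core hτ hγ hβ _ _ _ (hWup k i hi)
    have hIU : ∀ k : ℕ, frobSq (U (k + 1) i)
        = BCDaux.mip (U (k + 1) i) (W k i * V k (i - 1)) := by
      intro k
      apply BCDaux.radialU_core
      intro t ht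
      have hs : (0:ℝ) < 1 + t := by linarith
      rcases eq_or_lt_of_le hih with hieq | hilt
      · subst hieq
        have hY := hUh k ((1 + t) • U (k + 1) i)
        rw [BCDaux.hdmxM_smul hs] at hY
        have h1 : (τ / 2) * frobSq (U (k + 1) i - W k i * V k (i - 1))
            ≤ (τ / 2) * frobSq ((1 + t) • U (k + 1) i - W k i * V k (i - 1)) := by
          linarith
        exact le_of_mul_le_mul_left h1 (by positivity)
      · have hmem : i ∈ Finset.Icc 1 (h - 1) := Finset.mem_Icc.2 ⟨hi1, by omega⟩
        have hY := hUup k i hmem ((1 + t) • U (k + 1) i)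
        rw [BCDaux.stepM_smul hs] at hY
        have h1 : (τ / 2) * frobSq (U (k + 1) i - W k i * V k (i - 1))
            ≤ (τ / 2) * frobSq ((1 + t) • U (k + 1) i - W k i * V k (i - 1)) := by
          linarith
        exact le_of_mul_le_mul_left h1 (by positivity)
    -- uniform bounds
    set Cw : ℝ := Real.sqrt (2 * FF 0 / γ) with hCwdef
    have hWbd : ∀ k : ℕ, BCDaux.nrm (W (k + 1) i) ≤ Cw := by
      intro k
      have hterm : lam * norm20 (W (k + 1) i) + (γ / 2) * frobSq (W (k + 1) i)
          ≤ ∑ j ∈ Finset.Icc 1 h,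
            (lam * norm20 (W (k + 1) j) + (γ / 2) * frobSq (W (k + 1) j)) :=
        Finset.single_le_sum
          (f := fun j => lam * norm20 (W (k + 1) j) + (γ / 2) * frobSq (W (k + 1) j))
          (fun j _ => add_nonneg (mul_nonneg hlam.le (BCDaux.norm20_nonneg _))
            (mul_nonneg (by positivity) (BCDaux.frobSq_nonneg _))) hi
      have hn20 : 0 ≤ lam * norm20 (W (k + 1) i) :=
        mul_nonneg hlam.le (BCDaux.norm20_nonneg _)
      have h1 : 0 ≤ (1 / (2 * (N : ℝ))) * frobSq (Y - hdmxM (U (k + 1) h)) :=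
        mul_nonneg (by positivity) (BCDaux.frobSq_nonneg _)
      have h3 : 0 ≤ (τ / 2) * (∑ j ∈ Finset.Icc 1 h,
          frobSq (U (k + 1) j - W (k + 1) j * V (k + 1) (j - 1))) :=
        mul_nonneg (by positivity)
          (Finset.sum_nonneg fun j _ => BCDaux.frobSq_nonneg _)
      have h4 : 0 ≤ (π / 2) * (∑ j ∈ Finset.Icc 1 (h - 1),
          frobSq (V (k + 1) j - stepM (U (k + 1) j))) :=
        mul_nonneg (by positivity)
          (Finset.sum_nonneg fun j _ => BCDaux.frobSq_nonneg _)
      have hFFk1 := hFF (k + 1)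
      have hfle := hFle (k + 1)
      have h2 : frobSq (W (k + 1) i) ≤ 2 * FF 0 / γ := by
        rw [le_div_iff₀ hγ]
        nlinarith
      exact Real.sqrt_le_sqrt h2
    have hCw0 : 0 ≤ Cw := Real.sqrt_nonneg _
    set Cv : ℝ := BCDaux.nrm V0 + Real.sqrt (2 * FF 0 / π)
      + Real.sqrt ((d (i - 1) : ℝ) * (N : ℝ)) with hCvdef
    have hVbd : ∀ k : ℕ, BCDaux.nrm (V k (i - 1)) ≤ Cv := by
      intro k
      have hsq0 : (0:ℝ) ≤ Real.sqrt (2 * FF 0 / π) := Real.sqrt_nonneg _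
      have hsq1 : (0:ℝ) ≤ Real.sqrt ((d (i - 1) : ℝ) * (N : ℝ)) := Real.sqrt_nonneg _
      have hv00 : (0:ℝ) ≤ BCDaux.nrm V0 := BCDaux.nrm_nonneg _
      rcases eq_or_lt_of_le hi1 with h1i | h1i
      · -- i = 1
        have hV : BCDaux.nrm (V k (i - 1)) = BCDaux.nrm V0 := by
          subst h1i
          show BCDaux.nrm (V k 0) = BCDaux.nrm V0
          rw [hV0]
        rw [hV, hCvdef]
        linarith
      · -- 2 ≤ i
        have hjmem : i - 1 ∈ Finset.Icc 1 (h - 1) := Finset.mem_Icc.2 ⟨by omega, by omega⟩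
        have hterm : frobSq (V k (i - 1) - stepM (U k (i - 1)))
            ≤ ∑ j ∈ Finset.Icc 1 (h - 1), frobSq (V k j - stepM (U k j)) :=
          Finset.single_le_sum (f := fun j => frobSq (V k j - stepM (U k j)))
            (fun j _ => BCDaux.frobSq_nonneg _) hjmem
        have h1 : 0 ≤ (1 / (2 * (N : ℝ))) * frobSq (Y - hdmxM (U k h)) :=
          mul_nonneg (by positivity) (BCDaux.frobSq_nonneg _)
        have h2 : 0 ≤ ∑ j ∈ Finset.Icc 1 h,
            (lam * norm20 (W k j) + (γ / 2) * frobSq (W k j)) :=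
          Finset.sum_nonneg fun j _ => add_nonneg
            (mul_nonneg hlam.le (BCDaux.norm20_nonneg _))
            (mul_nonneg (by positivity) (BCDaux.frobSq_nonneg _))
        have h3 : 0 ≤ (τ / 2) * (∑ j ∈ Finset.Icc 1 h,
            frobSq (U k j - W k j * V k (j - 1))) :=
          mul_nonneg (by positivity)
            (Finset.sum_nonneg fun j _ => BCDaux.frobSq_nonneg _)
        have hFFk := hFF k
        have hfle := hFle k
        have hfr : frobSq (V k (i - 1) - stepM (U k (i - 1))) ≤ 2 * FF 0 / π := by
          rw [le_div_iff₀ hπ]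
          nlinarith
        have hnrm1 : BCDaux.nrm (V k (i - 1) - stepM (U k (i - 1)))
            ≤ Real.sqrt (2 * FF 0 / π) := Real.sqrt_le_sqrt hfr
        have hnrm2 : BCDaux.nrm (stepM (U k (i - 1)))
            ≤ Real.sqrt ((d (i - 1) : ℝ) * (N : ℝ)) :=
          Real.sqrt_le_sqrt (BCDaux.frobSq_stepM_le _)
        have hdecomp : V k (i - 1)
            = (V k (i - 1) - stepM (U k (i - 1))) + stepM (U k (i - 1)) := by abel
        have h5 : BCDaux.nrm (V k (i - 1))
            ≤ BCDaux.nrm (V k (i - 1) - stepM (U k (i - 1)))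
              + BCDaux.nrm (stepM (U k (i - 1))) := by
          calc BCDaux.nrm (V k (i - 1))
              = BCDaux.nrm ((V k (i - 1) - stepM (U k (i - 1))) + stepM (U k (i - 1))) := by
                rw [← hdecomp]
            _ ≤ _ := BCDaux.nrm_add_le _ _
        rw [hCvdef]
        linarith
    -- contraction setup
    set A : ℕ → ℝ := fun k => BCDaux.nrm (W k i * V k (i - 1)) with hAdef
    set B : ℕ → ℝ := fun k => BCDaux.nrm (W (k + 1) i * V k (i - 1)) with hBdef
    have hAnn : ∀ k, 0 ≤ A k := fun k => BCDaux.nrm_nonneg _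
    have hBnn : ∀ k, 0 ≤ B k := fun k => BCDaux.nrm_nonneg _
    set Cq : ℝ := max Cv 1 with hCqdef
    have hCq1 : (1:ℝ) ≤ Cq := le_max_right _ _
    have hCqpos : (0:ℝ) < Cq := lt_of_lt_of_le one_pos hCq1
    have hVCq : ∀ k, BCDaux.nrm (V k (i - 1)) ≤ Cq := fun k => (hVbd k).trans (le_max_left _ _)
    set q : ℝ := (τ * Cq ^ 2) / (γ + τ * Cq ^ 2) with hqdef
    have hdenpos : (0:ℝ) < γ + τ * Cq ^ 2 := by positivity
    have hq0 : 0 ≤ q := div_nonneg (by positivity) hdenpos.le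
    have hq1 : q < 1 := by
      rw [hqdef, div_lt_one hdenpos]
      linarith
    have hUA : ∀ k, BCDaux.nrm (U (k + 1) i) ≤ A k := by
      intro k
      have h1 := hIU k
      have h2 : BCDaux.mip (U (k + 1) i) (W k i * V k (i - 1))
          ≤ BCDaux.nrm (U (k + 1) i) * A k := BCDaux.mip_le_nrm _ _
      have h3 : BCDaux.nrm (U (k + 1) i) ^ 2 ≤ BCDaux.nrm (U (k + 1) i) * A k := by
        rw [BCDaux.sq_nrm]
        linarith
      rcases eq_or_lt_of_le (BCDaux.nrm_nonneg (U (k + 1) i)) with h0 | h0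
      · rw [← h0]
        exact hAnn k
      · nlinarith [h3, h0]
    have hBA : ∀ k, γ * frobSq (W (k + 1) i) + τ * (B k) ^ 2 ≤ τ * (B k * A k) := by
      intro k
      have h1 := hIW k
      have h2 : BCDaux.mip (W (k + 1) i * V k (i - 1)) (U (k + 1) i)
          ≤ B k * BCDaux.nrm (U (k + 1) i) := BCDaux.mip_le_nrm _ _
      have h4 : B k * BCDaux.nrm (U (k + 1) i) ≤ B k * A k :=
        mul_le_mul_of_nonneg_left (hUA k) (hBnn k)
      have h5 : (B k) ^ 2 = frobSq (W (k + 1) i * V k (i - 1)) := BCDaux.sq_nrm _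
      have h6 : τ * BCDaux.mip (W (k + 1) i * V k (i - 1)) (U (k + 1) i)
          ≤ τ * (B k * A k) := mul_le_mul_of_nonneg_left (h2.trans h4) hτ.le
      rw [h5]
      linarith
    have hBq : ∀ k, B k ≤ q * A k := by
      intro k
      have h0 := hBA k
      have hWge : B k ≤ BCDaux.nrm (W (k + 1) i) * Cq := by
        have ha := BCDaux.nrm_mul_le (W (k + 1) i) (V k (i - 1))
        have hb := mul_le_mul_of_nonneg_left (hVCq k) (BCDaux.nrm_nonneg (W (k + 1) i))
        exact ha.trans hb
      have h1 : (B k) ^ 2 ≤ (BCDaux.nrm (W (k + 1) i)) ^ 2 * Cq ^ 2 := by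
        nlinarith [hBnn k, BCDaux.nrm_nonneg (W (k + 1) i), hCqpos]
      have hfrW2 : γ * Cq ^ 2 * frobSq (W (k + 1) i)
          = γ * Cq ^ 2 * (BCDaux.nrm (W (k + 1) i)) ^ 2 := by
        rw [BCDaux.sq_nrm]
      have s0 := mul_le_mul_of_nonneg_left h0 (sq_nonneg Cq)
      have s1 := mul_le_mul_of_nonneg_left h1 hγ.le
      have h2 : γ * (B k) ^ 2 + (τ * Cq ^ 2) * (B k) ^ 2 ≤ (τ * Cq ^ 2) * (B k * A k) := by
        nlinarith [s0, s1, hfrW2]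
      rcases eq_or_lt_of_le (hBnn k) with hB0 | hBpos
      · rw [← hB0]
        exact mul_nonneg hq0 (hAnn k)
      · have h3 : B k * ((γ + τ * Cq ^ 2) * B k) ≤ B k * ((τ * Cq ^ 2) * A k) := by
          nlinarith [h2]
        have h4 := le_of_mul_le_mul_left h3 hBpos
        rw [hqdef, div_mul_eq_mul_div, le_div_iff₀ hdenpos]
        nlinarith [h4]
    -- ΔV → 0 for the relevant index
    have hDVfr : Tendsto (fun k => frobSq (V (k + 1) (i - 1) - V k (i - 1)))
        atTop (𝓝 0) := by
      rcases eq_or_lt_of_le hi1 with h1i | h1i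
      · subst h1i
        have hzero : (fun k => frobSq (V (k + 1) (1 - 1) - V k (1 - 1)))
            = fun _ => (0:ℝ) := by
          funext k
          show frobSq (V (k + 1) 0 - V k 0) = 0
          rw [hV0, hV0, sub_self]
          exact BCDaux.frobSq_zero
        rw [hzero]
        exact tendsto_const_nhds
      · exact dv0 (i - 1) (Finset.mem_Icc.2 ⟨by omega, by omega⟩)
    have hεlim : Tendsto (fun k => Cw * BCDaux.nrm (V (k + 1) (i - 1) - V k (i - 1)))
        atTop (𝓝 0) := by
      have hsq : Tendsto (fun k => Real.sqrt (frobSq (V (k + 1) (i - 1) - V k (i - 1))))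
          atTop (𝓝 0) := by
        have := (Real.continuous_sqrt.tendsto 0).comp hDVfr
        simpa [Function.comp_def] using this
      have := hsq.const_mul Cw
      simpa [BCDaux.nrm] using this
    have hrec : ∀ k, A (k + 1) ≤ q * A k
        + Cw * BCDaux.nrm (V (k + 1) (i - 1) - V k (i - 1)) := by
      intro k
      have hsplit : W (k + 1) i * V (k + 1) (i - 1)
          = W (k + 1) i * V k (i - 1) + W (k + 1) i * (V (k + 1) (i - 1) - V k (i - 1)) := by
        rw [Matrix.mul_sub]
        abel
      have h1 : A (k + 1) ≤ B k
          + BCDaux.nrm (W (k + 1) i * (V (k + 1) (i - 1) - V k (i - 1))) := by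
        show BCDaux.nrm (W (k + 1) i * V (k + 1) (i - 1)) ≤ _
        rw [hsplit]
        exact BCDaux.nrm_add_le _ _
      have h2 : BCDaux.nrm (W (k + 1) i * (V (k + 1) (i - 1) - V k (i - 1)))
          ≤ Cw * BCDaux.nrm (V (k + 1) (i - 1) - V k (i - 1)) :=
        (BCDaux.nrm_mul_le _ _).trans
          (mul_le_mul_of_nonneg_right (hWbd k) (BCDaux.nrm_nonneg _))
      have h3 := hBq k
      linarith
    have hA0 : Tendsto A atTop (𝓝 0) :=
      BCDaux.tendsto_zero_of_contract A _ q hq0 hq1 hAnn hrec hεlim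
    -- W → 0
    have hub : ∀ k, frobSq (W (k + 1) i) ≤ (τ * (A k * A k)) / γ := by
      intro k
      have h0 := hBA k
      have hBle : B k ≤ A k := by
        have h1 := hBq k
        have h2 : q * A k ≤ 1 * A k :=
          mul_le_mul_of_nonneg_right (by linarith) (hAnn k)
        linarith [one_mul (A k)]
      have hBA2 : τ * (B k * A k) ≤ τ * (A k * A k) := by
        apply mul_le_mul_of_nonneg_left _ hτ.le
        nlinarith [mul_nonneg (sub_nonneg.2 hBle) (hAnn k)]
      have hBsq : 0 ≤ τ * B k ^ 2 := mul_nonneg hτ.le (sq_nonneg _)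
      have h1 : γ * frobSq (W (k + 1) i) ≤ τ * (A k * A k) := by
        linarith [h0, hBA2, hBsq]
      rw [le_div_iff₀ hγ]
      nlinarith [h1]
    have hlim2 : Tendsto (fun k => (τ * (A k * A k)) / γ) atTop (𝓝 0) := by
      have := ((hA0.mul hA0).const_mul τ).div_const γ
      simpa using this
    have hWfr : Tendsto (fun k => frobSq (W (k + 1) i)) atTop (𝓝 0) :=
      squeeze_zero (fun k => BCDaux.frobSq_nonneg _) hub hlim2
    have hWfr' : Tendsto (fun k => frobSq (W k i)) atTop (𝓝 0) :=
      (tendsto_add_atTop_iff_nat 1).1 hWfr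
    apply BCDaux.tendsto_matrix_zero_of_frobSq
    have hub2 : ∀ k, frobSq (W (k + 1) i - W k i)
        ≤ 2 * frobSq (W (k + 1) i) + 2 * frobSq (W k i) :=
      fun k => BCDaux.frobSq_sub_le _ _
    have hlim3 : Tendsto (fun k => 2 * frobSq (W (k + 1) i) + 2 * frobSq (W k i))
        atTop (𝓝 0) := by
      have := (hWfr.const_mul 2).add (hWfr'.const_mul 2)
      simpa using this
    exact squeeze_zero (fun k => BCDaux.frobSq_nonneg _) hub2 hlim3
  exact ⟨mono, ⟨⨅ k, FF k, hconv⟩, conc3, conc4⟩
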